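/- In the non-completeness counterexample, the tuple ⟨Q, D_2, S, S′⟩ is co-intersectable: there exists a skeleton σ and b ∈ σ(E_1) and i_y ∈ Q|_b such that D_2|_{i_y} ∩ S|_b ∩ S′|_b ≠ ∅. -/

import Mathlib

/-- Kinds of item classes in a relational schema. -/
inductive ItemKind | entity | relationship
deriving DecidableEq

/-- Cardinalities. -/
inductive Card | one | many
deriving DecidableEq

/-- A relational schema: item classes with kinds, participation of entity
classes in relationship classes, and a cardinality function `card R E`. -/
structure Schema where
  Class : Type
  kind : Class → ItemKind
  participates : Class → Class → Prop   -- `participates E R`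
  card : Class → Class → Card           -- `card R E`

namespace Schema

/-- Condition (1) of relational paths: alternation between entity and
relationship classes, with participation at each consecutive pair. -/
def Alternates (S : Schema) (P : List S.Class) : Prop :=
  ∀ i a b, P[i]? = some a → P[i+1]? = some b →
    ((S.kind a = .entity ∧ S.kind b = .relationship ∧ S.participates a b) ∨
     (S.kind a = .relationship ∧ S.kind b = .entity ∧ S.participates b a))

/-- Condition (2): in every subsequence `[E, R, E']`, `E ≠ E'`. -/
def NoERE (S : Schema) (P : List S.Class) : Prop :=
  ∀ i a b c, P[i]? = some a → P[i+1]? = some b → P[i+2]? = some c →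
    S.kind a = .entity → a ≠ c

/-- Condition (3): in every subsequence `[R, E, R']` with `R = R'`,
`card (R, E) = many`. -/
def CardMany (S : Schema) (P : List S.Class) : Prop :=
  ∀ i a b c, P[i]? = some a → P[i+1]? = some b → P[i+2]? = some c →
    S.kind a = .relationship → a = c → S.card a b = .many

/-- A valid relational path. -/
def ValidPath (S : Schema) (P : List S.Class) : Prop :=
  P ≠ [] ∧ S.Alternates P ∧ S.NoERE P ∧ S.CardMany P

end Schema

/-- A relational skeleton instantiating a schema: items with classes and a
symmetric adjacency relation, respecting participation and cardinality
constraints (`card = one` forces at most one adjacent relationship instance;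
relationship instances have exactly one adjacent entity instance per
participating entity class). -/
structure Skeleton (S : Schema) where
  Item : Type
  classOf : Item → S.Class
  adj : Item → Item → Prop
  adj_symm : ∀ {i j}, adj i j → adj j i
  adj_alt : ∀ {i j}, adj i j →
    (S.kind (classOf i) = .entity ∧ S.kind (classOf j) = .relationship ∧
      S.participates (classOf i) (classOf j)) ∨
    (S.kind (classOf i) = .relationship ∧ S.kind (classOf j) = .entity ∧
      S.participates (classOf j) (classOf i))
  card_one : ∀ {e r r'}, S.kind (classOf e) = .entity →
    S.card (classOf r) (classOf e) = .one → classOf r = classOf r' →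
    adj e r → adj e r' → r = r'
  rel_unique : ∀ {r i j}, S.kind (classOf r) = .relationship →
    adj r i → adj r j → classOf i = classOf j → i = j
  rel_total : ∀ {r E}, S.kind (classOf r) = .relationship →
    S.participates E (classOf r) → ∃ e, classOf e = E ∧ adj r e

namespace Skeleton

variable {S : Schema} (σ : Skeleton S)

/-- Auxiliary recursion for terminal sets under bridge burning semantics:
`(tsetAux P b ℓ).1` is the terminal set `P^{1:ℓ+1}|_b` (0-indexed `ℓ`) and
`(tsetAux P b ℓ).2` is the set of all items visited up to step `ℓ`. -/
def tsetAux (P : List S.Class) (b : σ.Item) : ℕ → Set σ.Item × Set σ.Item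
  | 0 => ({b}, {b})
  | ℓ+1 =>
      let prev := tsetAux P b ℓ
      let cur : Set σ.Item :=
        {i | P[ℓ+1]? = some (σ.classOf i) ∧ (∃ j ∈ prev.1, σ.adj i j) ∧
             i ∉ prev.2}
      (cur, prev.2 ∪ cur)

/-- The terminal set `P^{1:ℓ+1}|_b` (so `ℓ` is 0-indexed: `tset P b 0 = {b}`). -/
def tset (P : List S.Class) (b : σ.Item) (ℓ : ℕ) : Set σ.Item :=
  (σ.tsetAux P b ℓ).1

/-- The (full) terminal set `P|_b`. -/
def tfull (P : List S.Class) (b : σ.Item) : Set σ.Item :=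
  σ.tset P b (P.length - 1)

end Skeleton

/-- Item classes of the non-completeness counterexample schema. -/
inductive C13 | E1 | E2 | E3 | E4 | E5 | R1 | R2 | R3
deriving DecidableEq

open C13 in
/-- The non-completeness counterexample schema: `R1=⟨E1,E2,E4⟩`,
`R2=⟨E2,E3⟩`, `R3=⟨E3,E4,E5⟩`, with all cardinalities `one`. -/
def S13 : Schema where
  Class := C13
  kind := fun c => match c with
    | R1 | R2 | R3 => .relationship
    | _ => .entity
  participates := fun e r =>
    (e, r) ∈ ([(E1,R1),(E2,R1),(E4,R1),(E2,R2),(E3,R2),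
               (E3,R3),(E4,R3),(E5,R3)] : List (C13 × C13))
  card := fun _ _ => .one

open C13 in
def P13 : List C13 := [E1,R1,E2,R2,E3]
open C13 in
def Q13 : List C13 := [E1,R1,E4,R3,E3,R2,E2]
open C13 in
def S14 : List C13 := [E1,R1,E4,R3,E5]
open C13 in
def Sp13 : List C13 := [E1,R1,E2,R2,E3,R3,E5]
open C13 in
def D1 : List C13 := [E2,R2,E3,R3,E4,R1,E2,R2,E3]
open C13 in
def D2 : List C13 := [E2,R2,E3,R3,E5]

instance : Fintype C13 :=
  ⟨{C13.E1, C13.E2, C13.E3, C13.E4, C13.E5, C13.R1, C13.R2, C13.R3}, by intro x; cases x <;> simp⟩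

instance : DecidableEq S13.Class := inferInstanceAs (DecidableEq C13)

open C13
/-- Adjacency for the canonical one-item-per-class skeleton. -/
def adj13 (i j : C13) : Prop :=
  (i, j) ∈ ([(E1,R1),(E2,R1),(E4,R1),(E2,R2),(E3,R2),
             (E3,R3),(E4,R3),(E5,R3)] : List (C13 × C13)) ∨
  (j, i) ∈ ([(E1,R1),(E2,R1),(E4,R1),(E2,R2),(E3,R2),
             (E3,R3),(E4,R3),(E5,R3)] : List (C13 × C13))

instance (i j : C13) : Decidable (adj13 i j) := by
  unfold adj13; infer_instance

instance (e r : C13) : Decidable (S13.participates e r) :=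
  inferInstanceAs (Decidable ((e, r) ∈ ([(E1,R1),(E2,R1),(E4,R1),(E2,R2),(E3,R2),
               (E3,R3),(E4,R3),(E5,R3)] : List (C13 × C13))))

lemma adj_alt13 : ∀ i j, adj13 i j →
    (S13.kind i = .entity ∧ S13.kind j = .relationship ∧ S13.participates i j) ∨
    (S13.kind i = .relationship ∧ S13.kind j = .entity ∧ S13.participates j i) := by
  intro a b; cases a <;> cases b <;> decide

lemma card_one13 : ∀ e r r' : C13, S13.kind e = .entity →
    S13.card r e = .one → r = r' → adj13 e r → adj13 e r' → r = r' := by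
  intro a b; cases a <;> cases b <;> decide

lemma rel_unique13 : ∀ r i j : C13, S13.kind r = .relationship →
    adj13 r i → adj13 r j → i = j → i = j := by
  intro a b; cases a <;> cases b <;> decide

lemma rel_total13 : ∀ r E : C13, S13.kind r = .relationship →
    S13.participates E r → ∃ e : C13, e = E ∧ adj13 r e := by
  intro a b; cases a <;> cases b <;> decide

/-- The canonical skeleton of `S13` with one item per class. -/
@[reducible] def sk13 : Skeleton S13 where
  Item := C13
  classOf := id
  adj := adj13
  adj_symm := by intro i j h; unfold adj13 at *; tauto
  adj_alt := fun {i j} h => adj_alt13 i j h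
  card_one := fun {e r r'} h1 h2 h3 h4 h5 => card_one13 e r r' h1 h2 h3 h4 h5
  rel_unique := fun {r i j} h1 h2 h3 h4 => rel_unique13 r i j h1 h2 h3 h4
  rel_total := fun {r E} h1 h2 => rel_total13 r E h1 h2

lemma q0 : sk13.tsetAux Q13 E1 0 = ({E1}, {E1}) := rfl

lemma q1 : sk13.tsetAux Q13 E1 1 = ({R1}, ({E1, R1} : Set C13)) := by
  erw [show (1:ℕ) = 0+1 from rfl, Skeleton.tsetAux.eq_2, q0]
  refine Prod.ext ?_ ?_ <;> dsimp only <;> ext x <;> cases x <;>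
    simp [Q13, sk13, adj13, Set.mem_setOf_eq, Set.mem_insert_iff,
      Set.mem_singleton_iff] <;> decide

lemma q2 : sk13.tsetAux Q13 E1 2 = ({E4}, ({E1, R1, E4} : Set C13)) := by
  erw [show (2:ℕ) = 1+1 from rfl, Skeleton.tsetAux.eq_2, q1]
  refine Prod.ext ?_ ?_ <;> dsimp only <;> ext x <;> cases x <;>
    simp [Q13, sk13, adj13, Set.mem_setOf_eq, Set.mem_insert_iff,
      Set.mem_singleton_iff] <;> decide

lemma q3 : sk13.tsetAux Q13 E1 3 = ({R3}, ({E1, R1, E4, R3} : Set C13)) := by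
  erw [show (3:ℕ) = 2+1 from rfl, Skeleton.tsetAux.eq_2, q2]
  refine Prod.ext ?_ ?_ <;> dsimp only <;> ext x <;> cases x <;>
    simp [Q13, sk13, adj13, Set.mem_setOf_eq, Set.mem_insert_iff,
      Set.mem_singleton_iff] <;> decide

lemma q4 : sk13.tsetAux Q13 E1 4 = ({E3}, ({E1, R1, E4, R3, E3} : Set C13)) := by
  erw [show (4:ℕ) = 3+1 from rfl, Skeleton.tsetAux.eq_2, q3]
  refine Prod.ext ?_ ?_ <;> dsimp only <;> ext x <;> cases x <;>
    simp [Q13, sk13, adj13, Set.mem_setOf_eq, Set.mem_insert_iff,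
      Set.mem_singleton_iff] <;> decide

lemma q5 : sk13.tsetAux Q13 E1 5 = ({R2}, ({E1, R1, E4, R3, E3, R2} : Set C13)) := by
  erw [show (5:ℕ) = 4+1 from rfl, Skeleton.tsetAux.eq_2, q4]
  refine Prod.ext ?_ ?_ <;> dsimp only <;> ext x <;> cases x <;>
    simp [Q13, sk13, adj13, Set.mem_setOf_eq, Set.mem_insert_iff,
      Set.mem_singleton_iff] <;> decide

lemma q6 : sk13.tsetAux Q13 E1 6 = ({E2}, ({E1, R1, E4, R3, E3, R2, E2} : Set C13)) := by
  erw [show (6:ℕ) = 5+1 from rfl, Skeleton.tsetAux.eq_2, q5]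
  refine Prod.ext ?_ ?_ <;> dsimp only <;> ext x <;> cases x <;>
    simp [Q13, sk13, adj13, Set.mem_setOf_eq, Set.mem_insert_iff,
      Set.mem_singleton_iff] <;> decide

lemma qfull : sk13.tfull Q13 E1 = {E2} := by
  show (sk13.tsetAux Q13 E1 6).1 = _
  rw [q6]

lemma d0 : sk13.tsetAux D2 E2 0 = ({E2}, {E2}) := rfl

lemma d1 : sk13.tsetAux D2 E2 1 = ({R2}, ({E2, R2} : Set C13)) := by
  erw [show (1:ℕ) = 0+1 from rfl, Skeleton.tsetAux.eq_2, d0]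
  refine Prod.ext ?_ ?_ <;> dsimp only <;> ext x <;> cases x <;>
    simp [D2, sk13, adj13, Set.mem_setOf_eq, Set.mem_insert_iff,
      Set.mem_singleton_iff] <;> decide

lemma d2 : sk13.tsetAux D2 E2 2 = ({E3}, ({E2, R2, E3} : Set C13)) := by
  erw [show (2:ℕ) = 1+1 from rfl, Skeleton.tsetAux.eq_2, d1]
  refine Prod.ext ?_ ?_ <;> dsimp only <;> ext x <;> cases x <;>
    simp [D2, sk13, adj13, Set.mem_setOf_eq, Set.mem_insert_iff,
      Set.mem_singleton_iff] <;> decide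

lemma d3 : sk13.tsetAux D2 E2 3 = ({R3}, ({E2, R2, E3, R3} : Set C13)) := by
  erw [show (3:ℕ) = 2+1 from rfl, Skeleton.tsetAux.eq_2, d2]
  refine Prod.ext ?_ ?_ <;> dsimp only <;> ext x <;> cases x <;>
    simp [D2, sk13, adj13, Set.mem_setOf_eq, Set.mem_insert_iff,
      Set.mem_singleton_iff] <;> decide

lemma d4 : sk13.tsetAux D2 E2 4 = ({E5}, ({E2, R2, E3, R3, E5} : Set C13)) := by
  erw [show (4:ℕ) = 3+1 from rfl, Skeleton.tsetAux.eq_2, d3]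
  refine Prod.ext ?_ ?_ <;> dsimp only <;> ext x <;> cases x <;>
    simp [D2, sk13, adj13, Set.mem_setOf_eq, Set.mem_insert_iff,
      Set.mem_singleton_iff] <;> decide

lemma dfull : sk13.tfull D2 E2 = {E5} := by
  show (sk13.tsetAux D2 E2 4).1 = _
  rw [d4]

lemma s0 : sk13.tsetAux S14 E1 0 = ({E1}, {E1}) := rfl

lemma s1 : sk13.tsetAux S14 E1 1 = ({R1}, ({E1, R1} : Set C13)) := by
  erw [show (1:ℕ) = 0+1 from rfl, Skeleton.tsetAux.eq_2, s0]
  refine Prod.ext ?_ ?_ <;> dsimp only <;> ext x <;> cases x <;>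
    simp [S14, sk13, adj13, Set.mem_setOf_eq, Set.mem_insert_iff,
      Set.mem_singleton_iff] <;> decide

lemma s2 : sk13.tsetAux S14 E1 2 = ({E4}, ({E1, R1, E4} : Set C13)) := by
  erw [show (2:ℕ) = 1+1 from rfl, Skeleton.tsetAux.eq_2, s1]
  refine Prod.ext ?_ ?_ <;> dsimp only <;> ext x <;> cases x <;>
    simp [S14, sk13, adj13, Set.mem_setOf_eq, Set.mem_insert_iff,
      Set.mem_singleton_iff] <;> decide

lemma s3 : sk13.tsetAux S14 E1 3 = ({R3}, ({E1, R1, E4, R3} : Set C13)) := by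
  erw [show (3:ℕ) = 2+1 from rfl, Skeleton.tsetAux.eq_2, s2]
  refine Prod.ext ?_ ?_ <;> dsimp only <;> ext x <;> cases x <;>
    simp [S14, sk13, adj13, Set.mem_setOf_eq, Set.mem_insert_iff,
      Set.mem_singleton_iff] <;> decide

lemma s4 : sk13.tsetAux S14 E1 4 = ({E5}, ({E1, R1, E4, R3, E5} : Set C13)) := by
  erw [show (4:ℕ) = 3+1 from rfl, Skeleton.tsetAux.eq_2, s3]
  refine Prod.ext ?_ ?_ <;> dsimp only <;> ext x <;> cases x <;>
    simp [S14, sk13, adj13, Set.mem_setOf_eq, Set.mem_insert_iff,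
      Set.mem_singleton_iff] <;> decide

lemma sfull : sk13.tfull S14 E1 = {E5} := by
  show (sk13.tsetAux S14 E1 4).1 = _
  rw [s4]

lemma p0 : sk13.tsetAux Sp13 E1 0 = ({E1}, {E1}) := rfl

lemma p1 : sk13.tsetAux Sp13 E1 1 = ({R1}, ({E1, R1} : Set C13)) := by
  erw [show (1:ℕ) = 0+1 from rfl, Skeleton.tsetAux.eq_2, p0]
  refine Prod.ext ?_ ?_ <;> dsimp only <;> ext x <;> cases x <;>
    simp [Sp13, sk13, adj13, Set.mem_setOf_eq, Set.mem_insert_iff,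
      Set.mem_singleton_iff] <;> decide

lemma p2 : sk13.tsetAux Sp13 E1 2 = ({E2}, ({E1, R1, E2} : Set C13)) := by
  erw [show (2:ℕ) = 1+1 from rfl, Skeleton.tsetAux.eq_2, p1]
  refine Prod.ext ?_ ?_ <;> dsimp only <;> ext x <;> cases x <;>
    simp [Sp13, sk13, adj13, Set.mem_setOf_eq, Set.mem_insert_iff,
      Set.mem_singleton_iff] <;> decide

lemma p3 : sk13.tsetAux Sp13 E1 3 = ({R2}, ({E1, R1, E2, R2} : Set C13)) := by
  erw [show (3:ℕ) = 2+1 from rfl, Skeleton.tsetAux.eq_2, p2]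
  refine Prod.ext ?_ ?_ <;> dsimp only <;> ext x <;> cases x <;>
    simp [Sp13, sk13, adj13, Set.mem_setOf_eq, Set.mem_insert_iff,
      Set.mem_singleton_iff] <;> decide

lemma p4 : sk13.tsetAux Sp13 E1 4 = ({E3}, ({E1, R1, E2, R2, E3} : Set C13)) := by
  erw [show (4:ℕ) = 3+1 from rfl, Skeleton.tsetAux.eq_2, p3]
  refine Prod.ext ?_ ?_ <;> dsimp only <;> ext x <;> cases x <;>
    simp [Sp13, sk13, adj13, Set.mem_setOf_eq, Set.mem_insert_iff,
      Set.mem_singleton_iff] <;> decide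

lemma p5 : sk13.tsetAux Sp13 E1 5 = ({R3}, ({E1, R1, E2, R2, E3, R3} : Set C13)) := by
  erw [show (5:ℕ) = 4+1 from rfl, Skeleton.tsetAux.eq_2, p4]
  refine Prod.ext ?_ ?_ <;> dsimp only <;> ext x <;> cases x <;>
    simp [Sp13, sk13, adj13, Set.mem_setOf_eq, Set.mem_insert_iff,
      Set.mem_singleton_iff] <;> decide

lemma p6 : sk13.tsetAux Sp13 E1 6 = ({E5}, ({E1, R1, E2, R2, E3, R3, E5} : Set C13)) := by
  erw [show (6:ℕ) = 5+1 from rfl, Skeleton.tsetAux.eq_2, p5]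
  refine Prod.ext ?_ ?_ <;> dsimp only <;> ext x <;> cases x <;>
    simp [Sp13, sk13, adj13, Set.mem_setOf_eq, Set.mem_insert_iff,
      Set.mem_singleton_iff] <;> decide

lemma pfull : sk13.tfull Sp13 E1 = {E5} := by
  show (sk13.tsetAux Sp13 E1 6).1 = _
  rw [p6]

/-- in the non-completeness counterexample, the tuple
`⟨Q, D_2, S, S′⟩` is co-intersectable: some skeleton, base `b` of class `E1`,
and `i_y ∈ Q|_b` satisfy `D_2|_{i_y} ∩ S|_b ∩ S′|_b ≠ ∅`. -/
theorem co_intersectable_Q_D2_S_Sp :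
    ∃ (σ : Skeleton S13) (b : σ.Item), σ.classOf b = C13.E1 ∧
      ∃ iy ∈ σ.tfull Q13 b,
        (σ.tfull D2 iy ∩ σ.tfull S14 b ∩ σ.tfull Sp13 b).Nonempty := by
  refine ⟨sk13, C13.E1, rfl, C13.E2, ?_, C13.E5, ?_⟩
  · rw [qfull]; rfl
  · rw [dfull, sfull, pfull]
    exact ⟨⟨rfl, rfl⟩, rfl⟩
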